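/- Let G act by isometries on a complete bounded metric space X such that the metric quotient X⫽G (the space of closed orbits with the induced infimum metric) is compact. If every function in RUC_u(X) is almost periodic, then X is compact. Conversely, if X is compact then every continuous function on X is almost periodic. -/

import Mathlib

open Filter Topology BoundedContinuousFunction

theorem stmt5 {G X : Type*} [Group G] [TopologicalSpace G] [IsTopologicalGroup G]
    [MetricSpace X] [CompleteSpace X] [MulAction G X] [ContinuousSMul G X]
    (hbdd : ∃ C : ℝ, ∀ x y : X, dist x y ≤ C)
    (hiso : ∀ (g : G) (x y : X), dist (g • x) (g • y) = dist x y)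
    (hquot : ∀ ε > (0 : ℝ), ∃ F : Finset X, ∀ x : X, ∃ a ∈ F, ∃ g : G, dist (g • a) x < ε) :
    ((∀ f : X →ᵇ ℝ, UniformContinuous f →
        (∀ ε > (0 : ℝ), ∃ U ∈ 𝓝 (1 : G), ∀ g ∈ U, ∀ x : X, |f (g⁻¹ • x) - f x| < ε) →
        TotallyBounded {h : X →ᵇ ℝ | ∃ g : G, ∀ x, h x = f (g⁻¹ • x)}) →
      CompactSpace X) ∧
    (CompactSpace X →
      ∀ f : X →ᵇ ℝ, TotallyBounded {h : X →ᵇ ℝ | ∃ g : G, ∀ x, h x = f (g⁻¹ • x)}) := by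
  classical
  constructor
  · intro hAP
    have htb : TotallyBounded (Set.univ : Set X) := by
      rw [Metric.totallyBounded_iff]
      intro ε hε
      set δ := ε / 3 with hδdef
      have hδ : 0 < δ := by positivity
      obtain ⟨F, hF⟩ := hquot δ hδ
      -- Key claim: each orbit `{g • a}` admits a finite `δ`-net.
      have key : ∀ a : X, ∃ s : Set X, s.Finite ∧ ∀ g : G, ∃ p ∈ s, dist p (g • a) < δ := by
        intro a
        set φ : ℝ → ℝ := fun t => max 0 (1 - t / δ) with hφ
        have φlip : ∀ s t : ℝ, |φ s - φ t| ≤ |s - t| / δ := by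
          intro s t
          have h1 : |φ s - φ t| ≤ |(1 - s / δ) - (1 - t / δ)| := by
            simpa [hφ, max_comm] using abs_max_sub_max_le_abs (1 - s / δ) (1 - t / δ) 0
          calc |φ s - φ t| ≤ |(1 - s / δ) - (1 - t / δ)| := h1
            _ = |s - t| / δ := by
                rw [show (1 - s / δ) - (1 - t / δ) = (t - s) / δ by ring, abs_div,
                  abs_of_pos hδ, abs_sub_comm]
        have φ0 : ∀ t : ℝ, 0 ≤ φ t := fun t => le_max_left _ _
        have φ1 : ∀ t : ℝ, 0 ≤ t → φ t ≤ 1 := by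
          intro t ht
          apply max_le (by norm_num)
          have : 0 ≤ t / δ := div_nonneg ht hδ.le
          linarith
        -- the bump function
        set f : X →ᵇ ℝ :=
          ⟨⟨fun x => φ (dist x a), by
              apply Continuous.max continuous_const
              exact continuous_const.sub ((continuous_id.dist continuous_const).div_const δ)⟩,
            1, by
              intro x y
              rw [Real.dist_eq]
              have h1 := φ1 (dist x a) dist_nonneg
              have h2 := φ1 (dist y a) dist_nonneg
              have h3 := φ0 (dist x a)
              have h4 := φ0 (dist y a)
              rw [abs_sub_le_iff]
              constructor <;> simp only [ContinuousMap.coe_mk] <;> linarith⟩ with hf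
        have hfapp : ∀ x : X, f x = φ (dist x a) := fun x => rfl
        have hUC : UniformContinuous f := by
          rw [Metric.uniformContinuous_iff]
          intro ε' hε'
          refine ⟨δ * ε', by positivity, fun {x y} hxy => ?_⟩
          rw [Real.dist_eq, hfapp, hfapp]
          calc |φ (dist x a) - φ (dist y a)| ≤ |dist x a - dist y a| / δ := φlip _ _
            _ ≤ dist x y / δ := by
                have := abs_dist_sub_le x y a
                gcongr
            _ < ε' := by rw [div_lt_iff₀ hδ]; linarith [hxy]
        -- translation identity
        have hshift : ∀ (g : G) (x : X), dist (g⁻¹ • x) a = dist x (g • a) := by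
          intro g x
          rw [← hiso g (g⁻¹ • x) a, smul_inv_smul]
        -- right uniform continuity
        have hRUC : ∀ ε' > (0 : ℝ), ∃ U ∈ 𝓝 (1 : G), ∀ g ∈ U, ∀ x : X,
            |f (g⁻¹ • x) - f x| < ε' := by
          intro ε' hε'
          have hc : Continuous fun g : G => g • a := continuous_id.smul continuous_const
          refine ⟨(fun g : G => g • a) ⁻¹' Metric.ball a (δ * ε' / 2),
            hc.continuousAt.preimage_mem_nhds (by
              rw [one_smul]; exact Metric.ball_mem_nhds a (by positivity)), ?_⟩
          intro g hg x
          have hga : dist (g • a) a < δ * ε' / 2 := hg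
          rw [hfapp, hfapp, hshift]
          calc |φ (dist x (g • a)) - φ (dist x a)| ≤ |dist x (g • a) - dist x a| / δ :=
              φlip _ _
            _ ≤ dist (g • a) a / δ := by
                have : |dist x (g • a) - dist x a| ≤ dist (g • a) a := by
                  rw [dist_comm x (g • a), dist_comm x a]
                  exact abs_dist_sub_le _ _ _
                gcongr
            _ < ε' := by rw [div_lt_iff₀ hδ]; nlinarith
        have htbS := hAP f hUC hRUC
        obtain ⟨t, htfin, htcov⟩ := Metric.totallyBounded_iff.mp htbS (1 / 2) (by norm_num)
        -- translates of f
        set τ : G → X →ᵇ ℝ := fun g =>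
          f.compContinuous ⟨fun x => g⁻¹ • x, continuous_const_smul _⟩ with hτ
        have hτapp : ∀ (g : G) (x : X), τ g x = f (g⁻¹ • x) := fun g x => rfl
        have hτmem : ∀ g : G, τ g ∈ {h : X →ᵇ ℝ | ∃ g : G, ∀ x, h x = f (g⁻¹ • x)} :=
          fun g => ⟨g, fun x => rfl⟩
        set gc : (X →ᵇ ℝ) → G := fun y =>
          if h : ∃ g : G, τ g ∈ Metric.ball y (1 / 2) then h.choose else 1 with hgc
        refine ⟨(fun y => gc y • a) '' t, htfin.image _, fun g => ?_⟩
        obtain ⟨y, hyt, hgy⟩ := Set.mem_iUnion₂.mp (htcov (hτmem g))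
        have hex : ∃ g' : G, τ g' ∈ Metric.ball y (1 / 2) := ⟨g, hgy⟩
        have hg' : τ (gc y) ∈ Metric.ball y (1 / 2) := by
          rw [hgc]; simp only [dif_pos hex]; exact hex.choose_spec
        refine ⟨gc y • a, ⟨y, hyt, rfl⟩, ?_⟩
        have hd1 : dist (τ g) (τ (gc y)) < 1 := by
          have h1 : dist (τ g) y < 1 / 2 := hgy
          have h2 : dist (τ (gc y)) y < 1 / 2 := hg'
          calc dist (τ g) (τ (gc y)) ≤ dist (τ g) y + dist y (τ (gc y)) := dist_triangle _ _ _
            _ < 1 := by rw [dist_comm y]; linarith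
        have hd2 : dist (τ g (g • a)) (τ (gc y) (g • a)) < 1 :=
          lt_of_le_of_lt (dist_coe_le_dist _) hd1
        have e1 : τ g (g • a) = 1 := by
          rw [hτapp, inv_smul_smul, hfapp]
          simp [hφ, dist_self]
        have e2 : τ (gc y) (g • a) = φ (dist (g • a) (gc y • a)) := by
          rw [hτapp, hfapp, hshift]
        rw [e1, e2, Real.dist_eq] at hd2
        rw [dist_comm]
        by_contra hcon
        push_neg at hcon
        have : φ (dist (g • a) (gc y • a)) = 0 := by
          rw [hφ]
          apply max_eq_left
          have : (1 : ℝ) ≤ dist (g • a) (gc y • a) / δ := (one_le_div hδ).mpr hcon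
          linarith
        rw [this] at hd2
        simp at hd2
      -- combine the per-orbit nets with hquot
      choose s hsfin hsnet using key
      refine ⟨⋃ a ∈ (F : Set X), s a, F.finite_toSet.biUnion fun a _ => hsfin a, ?_⟩
      intro x _
      obtain ⟨a, haF, g, hga⟩ := hF x
      obtain ⟨p, hp, hpd⟩ := hsnet a g
      refine Set.mem_iUnion₂.mpr ⟨p, Set.mem_biUnion haF hp, ?_⟩
      rw [Metric.mem_ball]
      calc dist x p ≤ dist x (g • a) + dist (g • a) p := dist_triangle _ _ _
        _ < δ + δ := by rw [dist_comm x (g • a), dist_comm (g • a) p]; exact add_lt_add hga hpd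
        _ ≤ ε := by rw [hδdef]; linarith
    exact isCompact_univ_iff.mp (TotallyBounded.isCompact_of_isClosed htb isClosed_univ)
  · intro hcomp f
    set S := {h : X →ᵇ ℝ | ∃ g : G, ∀ x, h x = f (g⁻¹ • x)} with hS
    have hclo : IsCompact (closure S) := by
      apply arzela_ascoli (Metric.closedBall (0 : ℝ) ‖f‖) (isCompact_closedBall _ _) S
      · rintro h x ⟨g, hg⟩
        rw [Metric.mem_closedBall, hg x, Real.dist_eq, sub_zero]
        exact f.norm_coe_le_norm _
      · apply UniformEquicontinuous.equicontinuous
        rw [Metric.uniformEquicontinuous_iff]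
        intro ε hε
        obtain ⟨δ, hδ, hd⟩ := Metric.uniformContinuous_iff.mp
          (CompactSpace.uniformContinuous_of_continuous f.continuous) ε hε
        refine ⟨δ, hδ, fun x y hxy i => ?_⟩
        obtain ⟨g, hg⟩ := i.2
        rw [show ((i : X →ᵇ ℝ) : X → ℝ) x = f (g⁻¹ • x) from hg x,
          show ((i : X →ᵇ ℝ) : X → ℝ) y = f (g⁻¹ • y) from hg y]
        exact hd (by rwa [hiso])
    exact hclo.totallyBounded.subset subset_closure
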